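/- Let V be a finite-dimensional vector space over F_q with dim V > D ≥ 0, and let ℙ(V) be the projective space of V. If Z ⊆ ℙ(V) is D-large, i.e. Z ∩ ℙ(W) ≠ ∅ for every linear subspace W ⊆ V with dim W > D (where ℙ(W) ⊆ ℙ(V) via the natural embedding), then |Z| ≥ |ℙ(V)| / (2 q^{D+1}). -/

import Mathlib

open scoped LinearAlgebra.Projectivization
open Module

/-- Let `V` be a finite-dimensional vector space over `F_q` with
`dim V > D`, and let `ℙ(V)` be its projective space.  If `Z ⊆ ℙ(V)` is `D`-large, i.e.
`Z` meets `ℙ(W)` for every linear subspace `W ⊆ V` of dimension `> D` (a point `z ∈ ℙ(V)`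
lies in `ℙ(W)` iff its line `z.submodule` is contained in `W`), then
`|Z| ≥ |ℙ(V)| / (2 q^{D+1})`. -/
theorem stmt17 (k : Type*) [Field k] [Fintype k]
    (V : Type*) [AddCommGroup V] [Module k V] [Module.Finite k V]
    (D : ℕ) (hD : D < Module.finrank k V)
    (Z : Set (Projectivization k V))
    (hlarge : ∀ W : Submodule k V, D < Module.finrank k W →
      ∃ z ∈ Z, z.submodule ≤ W) :
    (Nat.card (Projectivization k V) : ℝ) / (2 * (Fintype.card k : ℝ) ^ (D + 1)) ≤
      (Z.ncard : ℝ) := by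
  classical
  have hfinV : Finite V := Module.finite_of_finite k
  have hfinP : Finite (Projectivization k V) := Quotient.finite _
  set q := Fintype.card k with hq
  have hq2 : 2 ≤ q := Fintype.one_lt_card
  set n := Module.finrank k V with hn
  -- maximal T disjoint from Z
  set S : Set (Submodule k V) := {T | ∀ z ∈ Z, ¬ z.submodule ≤ T} with hS
  have hbot : (⊥ : Submodule k V) ∈ S := by
    intro z hz hle
    have h1 : z.rep ∈ (⊥ : Submodule k V) := hle
      (by rw [Projectivization.submodule_eq]; exact Submodule.mem_span_singleton_self _)
    exact z.rep_nonzero (by simpa using h1)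
  obtain ⟨T, hTS, hTmax⟩ := set_has_maximal_iff_noetherian.mpr inferInstance S ⟨⊥, hbot⟩
  have htD : finrank k T ≤ D := by
    by_contra h
    obtain ⟨z, hz, hle⟩ := hlarge T (by omega)
    exact hTS z hz hle
  -- quotient
  set U := V ⧸ T with hU
  have hmeq : finrank k U + finrank k T = n := Submodule.finrank_quotient_add_finrank T
  set m := finrank k U with hmdef
  have hm1 : 1 ≤ m := by omega
  -- injection ℙ(U) → Z
  have key : ∀ p : ℙ k U, ∃ z : Projectivization k V, z ∈ Z ∧
      ∃ h : T.mkQ z.rep ≠ 0, Projectivization.mk k (T.mkQ z.rep) h = p := by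
    intro p
    obtain ⟨v, hv⟩ := T.mkQ_surjective p.rep
    have hvT : v ∉ T := by
      intro hvT
      exact p.rep_nonzero (by rw [← hv, Submodule.mkQ_apply, Submodule.Quotient.mk_eq_zero _ |>.mpr hvT])
    set W : Submodule k V := T ⊔ Submodule.span k {v} with hW
    have hTW : T < W := by
      refine lt_of_le_of_ne le_sup_left ?_
      intro hEq
      exact hvT (hEq ▸ (le_sup_right (a := T) : Submodule.span k {v} ≤ W) (Submodule.mem_span_singleton_self v))
    have hWS : W ∉ S := fun hWS => hTmax W hWS hTW
    simp only [hS, Set.mem_setOf_eq, not_forall] at hWS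
    obtain ⟨z, hz, hle⟩ := hWS
    rw [not_not] at hle
    have hzrep : z.rep ∈ W := hle
      (by rw [Projectivization.submodule_eq]; exact Submodule.mem_span_singleton_self _)
    obtain ⟨a, haT, b, hb, hab⟩ := Submodule.mem_sup.mp hzrep
    obtain ⟨c, hc⟩ := Submodule.mem_span_singleton.mp hb
    have hcz : c ≠ 0 := by
      intro hc0
      apply hTS z hz
      rw [Projectivization.submodule_eq, Submodule.span_singleton_le_iff_mem]
      rw [← hab, ← hc, hc0, zero_smul, add_zero]; exact haT
    have h0 : T.mkQ a = 0 := (Submodule.Quotient.mk_eq_zero _).mpr haT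
    have hpi : T.mkQ z.rep = c • p.rep := by
      rw [← hab, ← hc, map_add, map_smul]
      simp only [Submodule.mkQ_apply] at h0 hv ⊢
      rw [h0, zero_add, hv]
    have hne : T.mkQ z.rep ≠ 0 := by
      rw [hpi]; exact smul_ne_zero hcz p.rep_nonzero
    refine ⟨z, hz, hne, ?_⟩
    have hmm : Projectivization.mk k (T.mkQ z.rep) hne =
        Projectivization.mk k p.rep p.rep_nonzero := by
      rw [Projectivization.mk_eq_mk_iff]
      exact ⟨Units.mk0 c hcz, by simp [hpi]⟩
    rw [hmm, Projectivization.mk_rep]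
  choose f hfZ hfne hfmk using key
  have hfinj : Function.Injective f := by
    intro p1 p2 hEq
    let g : {z : ℙ k V // T.mkQ z.rep ≠ 0} → ℙ k U :=
      fun z => Projectivization.mk k (T.mkQ z.1.rep) z.2
    have h1 : g ⟨f p1, hfne p1⟩ = p1 := hfmk p1
    have h2 : g ⟨f p2, hfne p2⟩ = p2 := hfmk p2
    rw [← h1, ← h2]
    exact congrArg g (Subtype.ext hEq)
  have hcard1 : Nat.card (ℙ k U) ≤ Z.ncard := by
    rw [← Nat.card_coe_set_eq]
    exact Nat.card_le_card_of_injective (fun p => (⟨f p, hfZ p⟩ : Z))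
      (fun p1 p2 h => hfinj (Subtype.ext_iff.mp h))
  -- chart injection : q^(m-1) ≤ card ℙ(U)
  have hfinU : Finite U := Quotient.finite _
  have hfinPU : Finite (ℙ k U) := Quotient.finite _
  have hchart : q ^ (m - 1) ≤ Nat.card (ℙ k U) := by
    obtain ⟨m', hm'⟩ : ∃ m', m = m' + 1 := ⟨m - 1, by omega⟩
    have hfr : finrank k U = m' + 1 := hmdef.symm.trans hm' ▸ rfl
    let b : Basis (Fin (m' + 1)) k U := Module.finBasisOfFinrankEq k U hfr
    have hnz : ∀ x : Fin m' → k, b.equivFun.symm (Fin.snoc x 1) ≠ 0 := by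
      intro x h0
      have h1 := congrArg b.equivFun h0
      rw [LinearEquiv.apply_symm_apply, map_zero] at h1
      have h2 := congrFun h1 (Fin.last m')
      simp [Fin.snoc_last] at h2
    have hginj : Function.Injective (fun x : Fin m' → k =>
        Projectivization.mk k (b.equivFun.symm (Fin.snoc x 1)) (hnz x)) := by
      intro x y hxy
      simp only [Projectivization.mk_eq_mk_iff] at hxy
      obtain ⟨a, ha⟩ := hxy
      have := congrArg b.equivFun ha
      simp only [Units.smul_def, map_smul, LinearEquiv.apply_symm_apply] at this
      have hlast := congrFun this (Fin.last m')
      simp only [Pi.smul_apply, Fin.snoc_last, smul_eq_mul, mul_one] at hlast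
      -- hlast : (a : k) * 1 = 1  (orientation?)
      have ha1 : (a : k) = 1 := by simpa using hlast
      rw [ha1, one_smul] at this
      funext i
      have := congrFun this i.castSucc
      simpa [Fin.snoc_castSucc] using this.symm
    calc q ^ (m - 1) = Nat.card (Fin m' → k) := by
          simp [Nat.card_fun, Nat.card_eq_fintype_card, hm', hq]
      _ ≤ Nat.card (ℙ k U) := Nat.card_le_card_of_injective _ hginj
  -- card ℙ(V) ≤ q^n
  have hrepinj : Function.Injective (Projectivization.rep : ℙ k V → V) := by
    intro u v h
    rw [← Projectivization.mk_rep u, ← Projectivization.mk_rep v]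
    congr 1
  have hcardV : Nat.card V = q ^ n := by
    have : Fintype V := Fintype.ofFinite V
    rw [Nat.card_eq_fintype_card, card_eq_pow_finrank (K := k)]
  have hPV : Nat.card (ℙ k V) ≤ q ^ n := by
    calc Nat.card (ℙ k V) ≤ Nat.card V := Nat.card_le_card_of_injective _ hrepinj
      _ = q ^ n := hcardV
  -- combine in ℕ
  have hnat : Nat.card (ℙ k V) ≤ 2 * q ^ (D + 1) * Z.ncard := by
    have h1 : q ^ n ≤ q ^ (D + 1) * q ^ (m - 1) := by
      rw [← pow_add]
      exact Nat.pow_le_pow_right (by omega) (by omega)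
    calc Nat.card (ℙ k V) ≤ q ^ n := hPV
      _ ≤ q ^ (D + 1) * q ^ (m - 1) := h1
      _ ≤ q ^ (D + 1) * Z.ncard := Nat.mul_le_mul_left _ (le_trans hchart hcard1)
      _ ≤ 2 * q ^ (D + 1) * Z.ncard := by
          rw [two_mul, add_mul]
          exact Nat.le_add_left _ _
  -- conclude in ℝ
  have hqpos : (0:ℝ) < 2 * (q : ℝ) ^ (D + 1) := by positivity
  rw [div_le_iff₀ hqpos]
  calc (Nat.card (ℙ k V) : ℝ) ≤ (2 * q ^ (D + 1) * Z.ncard : ℕ) := by exact_mod_cast hnat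
    _ = (Z.ncard : ℝ) * (2 * (q:ℝ) ^ (D+1)) := by push_cast; ring
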